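/- In the fully connected four-unit example with the stated potential outcomes, all unit-level ordered spillover effects of going from one to two treated neighbors (holding the rest fixed) are nonnegative, yet there exists a conditional assignment distribution (placing all mass on D=(1,1,1,0) given T_1=(1,2) and on D=(1,0,0,1) given T_1=(1,1)) under which the treated-neighbor-count estimand τ((1,2),(1,1)) = E[Y_1 | T_1=(1,2)] − E[Y_1 | T_1=(1,1)] equals −1. -/

import Mathlib

open Finset
open scoped Classical

noncomputable section

/-- Probability of event `A` under mass function `p` on a finite space. -/
def prb {Ω : Type*} [Fintype Ω] (p : Ω → ℝ) (A : Ω → Prop) : ℝ :=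
  ∑ ω, if A ω then p ω else 0

/-- Unnormalized expectation of `f` on the event `A`. -/
def eiv {Ω : Type*} [Fintype Ω] (p : Ω → ℝ) (f : Ω → ℝ) (A : Ω → Prop) : ℝ :=
  ∑ ω, if A ω then p ω * f ω else 0

/-- Expectation of `f`. -/
def expv {Ω : Type*} [Fintype Ω] (p : Ω → ℝ) (f : Ω → ℝ) : ℝ := ∑ ω, p ω * f ω

/-- Conditional expectation of `f` given the event `A`. -/
def cexp {Ω : Type*} [Fintype Ω] (p : Ω → ℝ) (f : Ω → ℝ) (A : Ω → Prop) : ℝ :=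
  eiv p f A / prb p A

/-- Conditional probability of `A` given `B`. -/
def cpr {Ω : Type*} [Fintype Ω] (p : Ω → ℝ) (A B : Ω → Prop) : ℝ :=
  prb p (fun ω => A ω ∧ B ω) / prb p B

/-- Real value of a boolean treatment. -/
def bR : Bool → ℝ := fun x => if x then 1 else 0

/-- Number of treated neighbors of unit 1 in the complete four-unit network. -/
def nb4 (d : Fin 4 → Bool) : ℕ := (Finset.univ.filter (fun j => j ≠ 0 ∧ d j = true)).card

/-- Potential outcomes of unit 1 in the complete four-unit example:
`Y₁(1,1,1,0)=1, Y₁(1,1,0,1)=2, Y₁(1,0,1,1)=3, Y₁(1,1,0,0)=0, Y₁(1,0,1,0)=1, Y₁(1,0,0,1)=2`,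
and `0` otherwise. -/
def Y1quad : (Fin 4 → Bool) → ℝ := fun d =>
  if d 0 = true ∧ (nb4 d = 1 ∨ nb4 d = 2) then bR (d 2) + 2 * bR (d 3) else 0

-- auxiliary section
abbrev dA : Fin 4 → Bool := ![true, true, true, false]
abbrev dB : Fin 4 → Bool := ![true, false, false, true]

lemma dAB_ne : dA ≠ dB := by decide

lemma nbA : nb4 dA = 2 := by decide
lemma nbB : nb4 dB = 1 := by decide

lemma sumtwo (f : (Fin 4 → Bool) → ℝ)
    (h : ∀ k, k ≠ dA → k ≠ dB → f k = 0) :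
    ∑ ω, f ω = f dA + f dB :=
  Finset.sum_eq_add_of_mem dA dB (Finset.mem_univ _) (Finset.mem_univ _) dAB_ne
    (fun k _ hk => h k hk.1 hk.2)

/-- all ordered unit-level spillover effects of going from one to two treated
neighbors are nonnegative, yet there exists an assignment distribution placing all conditional
mass on `D=(1,1,1,0)` given `T₁=(1,2)` and on `D=(1,0,0,1)` given `T₁=(1,1)` under which the
treated-neighbor-count estimand `τ((1,2),(1,1)) = E[Y₁|T₁=(1,2)] − E[Y₁|T₁=(1,1)] = -1`. -/
theorem stmt11 :
    (∀ d d' : Fin 4 → Bool, (∀ j, d' j = true → d j = true) →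
      d 0 = true → d' 0 = true → nb4 d = 2 → nb4 d' = 1 →
      0 ≤ Y1quad d - Y1quad d') ∧
    ∃ p : (Fin 4 → Bool) → ℝ,
      (∀ d, 0 ≤ p d) ∧ (∑ d, p d = 1) ∧
      cpr p (fun d => d = ![true, true, true, false])
        (fun d => d 0 = true ∧ nb4 d = 2) = 1 ∧
      cpr p (fun d => d = ![true, false, false, true])
        (fun d => d 0 = true ∧ nb4 d = 1) = 1 ∧
      cexp p Y1quad (fun d => d 0 = true ∧ nb4 d = 2) -
        cexp p Y1quad (fun d => d 0 = true ∧ nb4 d = 1) = -1 := by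
  constructor
  · intro d d' hmono h0 h0' h2 h1
    have hY : Y1quad d = bR (d 2) + 2 * bR (d 3) := by
      simp [Y1quad, h0, h2]
    have hY' : Y1quad d' = bR (d' 2) + 2 * bR (d' 3) := by
      simp [Y1quad, h0', h1]
    have hb2 : bR (d' 2) ≤ bR (d 2) := by
      rcases Bool.eq_false_or_eq_true (d' 2) with h | h
      · simp [bR, h, hmono 2 h]
      · simp only [bR, h]; positivity
    have hb3 : bR (d' 3) ≤ bR (d 3) := by
      rcases Bool.eq_false_or_eq_true (d' 3) with h | h
      · simp [bR, h, hmono 3 h]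
      · simp only [bR, h]; positivity
    rw [hY, hY']
    nlinarith
  · refine ⟨fun d => if d = dA then 1/2 else if d = dB then 1/2 else 0, ?_, ?_, ?_, ?_, ?_⟩
    · intro d
      dsimp only
      split <;> [norm_num; skip]
      split <;> norm_num
    · rw [sumtwo]
      · norm_num [dAB_ne]
      · intro k h1 h2; simp [h1, h2]
    · rw [cpr, prb, prb, sumtwo, sumtwo]
      · norm_num [dAB_ne, nbA, nbB, (by decide : dA 0 = true), (by decide : dB 0 = true)]
      · intro k h1 h2; simp [h1, h2]
      · intro k h1 h2; simp [h1, h2]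
    · rw [cpr, prb, prb, sumtwo, sumtwo]
      · norm_num [dAB_ne, dAB_ne.symm, nbA, nbB, (by decide : dA 0 = true), (by decide : dB 0 = true)]
      · intro k h1 h2; simp [h1, h2]
      · intro k h1 h2; simp [h1, h2]
    · rw [cexp, cexp, eiv, eiv, prb, prb, sumtwo, sumtwo, sumtwo, sumtwo]
      · have hYA : Y1quad dA = 1 := by norm_num [Y1quad, nbA, bR, (by decide : dA 2 = true), (by decide : dA 3 = false)]
        have hYB : Y1quad dB = 2 := by norm_num [Y1quad, nbB, bR, (by decide : dB 2 = false), (by decide : dB 3 = true)]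
        norm_num [dAB_ne, nbA, nbB, (by decide : dA 0 = true), (by decide : dB 0 = true), hYA, hYB]
      all_goals intro k h1 h2; simp [h1, h2]
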